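/- Let $A, B \subseteq \mathbb{Z}^n$ be finite nonempty sets. Then there exists a finite nonempty set $C \subseteq \mathbb{Z}^n$ such that $L_A \cdot L_C = L_B \cdot L_C$ in the Laurent polynomial ring $\mathbb{C}[x_1^{\pm 1}, \dots, x_n^{\pm 1}]$ if and only if the convex hulls of $A$ and $B$ in $\mathbb{R}^n$ coincide. (Equivalently: the Grothendieck semigroup of the semigroup $K_{\mathrm{mat}}[(\mathbb{C}^*)^n]$ of subspaces $L_A$ under product of subspaces is isomorphic to the semigroup of convex integral polytopes under Minkowski sum, via $L_A \mapsto \Delta(A)$.) -/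

import Mathlib

open Pointwise

/-- The embedding of the lattice `ℤⁿ` into `ℝⁿ`. -/
def latticeEmb (n : ℕ) : (Fin n → ℤ) → (Fin n → ℝ) := fun k i => (k i : ℝ)

/-- The subspace `L_A` of the Laurent polynomial algebra
`ℂ[x₁^{±1}, …, xₙ^{±1}]` (the monoid algebra of `ℤⁿ` over `ℂ`)
spanned by the monomials `x^k`, `k ∈ A`. -/
noncomputable def laurentSubspace (n : ℕ) (A : Finset (Fin n → ℤ)) :
    Submodule ℂ (AddMonoidAlgebra ℂ (Fin n → ℤ)) :=
  Submodule.span ℂ {f | ∃ k ∈ A, f = AddMonoidAlgebra.single k 1}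

lemma latticeEmb_add (n : ℕ) (k l : Fin n → ℤ) :
    latticeEmb n (k + l) = latticeEmb n k + latticeEmb n l := by
  funext i; simp [latticeEmb]

lemma latticeEmb_sub (n : ℕ) (k l : Fin n → ℤ) :
    latticeEmb n (k - l) = latticeEmb n k - latticeEmb n l := by
  funext i; simp [latticeEmb]

lemma gen_eq (n : ℕ) (A : Finset (Fin n → ℤ)) :
    {f | ∃ k ∈ A, f = AddMonoidAlgebra.single k 1} =
      (fun k => (AddMonoidAlgebra.single k 1 : AddMonoidAlgebra ℂ (Fin n → ℤ))) '' (↑A : Set (Fin n → ℤ)) := by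
  ext f; simp [eq_comm]

lemma laurent_eq_supported (n : ℕ) (A : Finset (Fin n → ℤ)) :
    laurentSubspace n A = AddMonoidAlgebra.supported ℂ ℂ (↑A : Set (Fin n → ℤ)) := by
  rw [laurentSubspace, gen_eq, AddMonoidAlgebra.supported_eq_span_single]

lemma laurent_mul (n : ℕ) (A B : Finset (Fin n → ℤ)) :
    laurentSubspace n A * laurentSubspace n B = laurentSubspace n (A + B) := by
  rw [laurentSubspace, laurentSubspace, laurentSubspace, Submodule.span_mul_span]
  congr 1
  ext f
  constructor
  · rintro ⟨g, ⟨k, hk, rfl⟩, h, ⟨l, hl, rfl⟩, rfl⟩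
    exact ⟨k + l, Finset.add_mem_add hk hl, by
      simpa using AddMonoidAlgebra.single_mul_single (a₁ := k) (b₁ := (1:ℂ)) (a₂ := l) (b₂ := 1)⟩
  · rintro ⟨m, hm, rfl⟩
    rw [Finset.mem_add] at hm
    obtain ⟨k, hk, l, hl, rfl⟩ := hm
    exact ⟨_, ⟨k, hk, rfl⟩, _, ⟨l, hl, rfl⟩, by
      simpa using AddMonoidAlgebra.single_mul_single (a₁ := k) (b₁ := (1:ℂ)) (a₂ := l) (b₂ := 1)⟩

lemma laurent_inj (n : ℕ) {A B : Finset (Fin n → ℤ)}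
    (h : laurentSubspace n A = laurentSubspace n B) : A = B := by
  rw [laurent_eq_supported, laurent_eq_supported] at h
  ext k
  constructor <;> intro hk
  · have : (AddMonoidAlgebra.single k 1 : AddMonoidAlgebra ℂ (Fin n → ℤ)) ∈
        AddMonoidAlgebra.supported ℂ ℂ (↑B : Set (Fin n → ℤ)) := by
      rw [← h, AddMonoidAlgebra.mem_supported, AddMonoidAlgebra.coeff_single, Finsupp.support_single_ne_zero k one_ne_zero]
      simpa using hk
    rw [AddMonoidAlgebra.mem_supported, AddMonoidAlgebra.coeff_single, Finsupp.support_single_ne_zero k one_ne_zero] at this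
    simpa using this
  · have : (AddMonoidAlgebra.single k 1 : AddMonoidAlgebra ℂ (Fin n → ℤ)) ∈
        AddMonoidAlgebra.supported ℂ ℂ (↑A : Set (Fin n → ℤ)) := by
      rw [h, AddMonoidAlgebra.mem_supported, AddMonoidAlgebra.coeff_single, Finsupp.support_single_ne_zero k one_ne_zero]
      simpa using hk
    rw [AddMonoidAlgebra.mem_supported, AddMonoidAlgebra.coeff_single, Finsupp.support_single_ne_zero k one_ne_zero] at this
    simpa using this

lemma sup'_add (n : ℕ) (A C : Finset (Fin n → ℤ)) (hA : A.Nonempty) (hC : C.Nonempty)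
    (f : (Fin n → ℝ) →L[ℝ] ℝ) :
    (A + C).sup' (hA.add hC) (fun k => f (latticeEmb n k)) =
      A.sup' hA (fun k => f (latticeEmb n k)) + C.sup' hC (fun k => f (latticeEmb n k)) := by
  apply le_antisymm
  · apply Finset.sup'_le
    intro x hx
    rw [Finset.mem_add] at hx
    obtain ⟨a, ha, c, hc, rfl⟩ := hx
    rw [latticeEmb_add, map_add]
    exact add_le_add (Finset.le_sup' (fun k => f (latticeEmb n k)) ha)
      (Finset.le_sup' (fun k => f (latticeEmb n k)) hc)
  · obtain ⟨a, ha, ha'⟩ := Finset.exists_mem_eq_sup' hA (fun k => f (latticeEmb n k))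
    obtain ⟨c, hc, hc'⟩ := Finset.exists_mem_eq_sup' hC (fun k => f (latticeEmb n k))
    rw [ha', hc']
    have : f (latticeEmb n a) + f (latticeEmb n c) = f (latticeEmb n (a + c)) := by
      rw [latticeEmb_add, map_add]
    rw [this]
    exact Finset.le_sup' (fun k => f (latticeEmb n k)) (Finset.add_mem_add ha hc)

lemma hull_subset_of_sup_le (n : ℕ) (A B : Finset (Fin n → ℤ)) (hA : A.Nonempty) (hB : B.Nonempty)
    (h : ∀ f : (Fin n → ℝ) →L[ℝ] ℝ,
      A.sup' hA (fun k => f (latticeEmb n k)) ≤ B.sup' hB (fun k => f (latticeEmb n k))) :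
    convexHull ℝ (latticeEmb n '' ↑A) ⊆ convexHull ℝ (latticeEmb n '' ↑B) := by
  apply convexHull_min _ (convex_convexHull ℝ _)
  rintro x ⟨a, ha, rfl⟩
  by_contra hx
  obtain ⟨f, u, hfu, huf⟩ := geometric_hahn_banach_closed_point
    (convex_convexHull ℝ (latticeEmb n '' ↑B))
    (((Set.toFinite _).image _).isCompact_convexHull ℝ).isClosed hx
  have h1 : A.sup' hA (fun k => f (latticeEmb n k)) < u := by
    calc A.sup' hA (fun k => f (latticeEmb n k)) ≤ _ := h f
    _ < u := by
      rw [Finset.sup'_lt_iff]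
      intro b hb
      exact hfu _ (subset_convexHull ℝ _ ⟨b, hb, rfl⟩)
  have h2 : f (latticeEmb n a) ≤ A.sup' hA (fun k => f (latticeEmb n k)) :=
    Finset.le_sup' (fun k => f (latticeEmb n k)) ha
  linarith

/-- Absorption: if `N ≥ |A|` and `emb x ∈ (N+1) • conv(A)` then
`x = a + c` with `a ∈ A` and `emb c ∈ N • conv(A)`. -/
lemma absorb (n : ℕ) (A : Finset (Fin n → ℤ)) (hA : A.Nonempty) (N : ℕ)
    (hN : A.card ≤ N) (hN1 : 1 ≤ N) (x : Fin n → ℤ)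
    (hx : latticeEmb n x ∈ ((N : ℝ) + 1) • convexHull ℝ (latticeEmb n '' ↑A)) :
    ∃ a ∈ A, latticeEmb n (x - a) ∈ (N : ℝ) • convexHull ℝ (latticeEmb n '' ↑A) := by
  set s : Finset (Fin n → ℝ) := A.image (latticeEmb n) with hs
  have hscoe : (↑s : Set (Fin n → ℝ)) = latticeEmb n '' ↑A := Finset.coe_image
  have hN1' : (0:ℝ) < (N : ℝ) + 1 := by positivity
  have hNpos : (0:ℝ) < (N : ℝ) := by exact_mod_cast hN1
  rw [Set.mem_smul_set_iff_inv_smul_mem₀ (ne_of_gt hN1')] at hx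
  set y := ((N : ℝ) + 1)⁻¹ • latticeEmb n x with hy
  rw [← hscoe, Finset.convexHull_eq] at hx
  obtain ⟨w, hw0, hw1, hwy⟩ := hx
  have hsne : s.Nonempty := hA.image _
  have hcard : (s.card : ℝ) ≤ (N : ℝ) + 1 := by
    have := Finset.card_image_le (s := A) (f := latticeEmb n)
    have : s.card ≤ N + 1 := le_trans (le_trans this hN) (Nat.le_succ N)
    exact_mod_cast this
  obtain ⟨b, hb, hwb⟩ : ∃ b ∈ s, ((N : ℝ) + 1)⁻¹ ≤ w b := by
    by_contra hcon
    push_neg at hcon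
    have h1 : (1:ℝ) = ∑ b ∈ s, w b := hw1.symm
    have h2 : ∑ b ∈ s, w b < ∑ b ∈ s, ((N : ℝ) + 1)⁻¹ :=
      Finset.sum_lt_sum_of_nonempty hsne (fun b hb => hcon b hb)
    have h3 : ∑ b ∈ s, ((N : ℝ) + 1)⁻¹ = s.card * ((N : ℝ) + 1)⁻¹ := by
      rw [Finset.sum_const, nsmul_eq_mul]
    have h4 : (s.card : ℝ) * ((N : ℝ) + 1)⁻¹ ≤ 1 := by
      rw [mul_inv_le_iff₀ hN1', one_mul]; exact hcard
    linarith
  obtain ⟨a, ha, hab⟩ : ∃ a ∈ A, latticeEmb n a = b := by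
    have := hb; rw [hs, Finset.mem_image] at this; exact this
  refine ⟨a, ha, ?_⟩
  rw [Set.mem_smul_set_iff_inv_smul_mem₀ (ne_of_gt hNpos), ← hscoe, Finset.convexHull_eq]
  set w' : (Fin n → ℝ) → ℝ := fun c => (N:ℝ)⁻¹ * (((N:ℝ) + 1) * w c - if c = b then 1 else 0)
    with hw'
  refine ⟨w', ?_, ?_, ?_⟩
  · intro c hc
    rw [hw']
    apply mul_nonneg (by positivity)
    by_cases h : c = b
    · subst h
      rw [if_pos rfl]
      have h1 := mul_le_mul_of_nonneg_left hwb (le_of_lt hN1')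
      rw [mul_inv_cancel₀ (ne_of_gt hN1')] at h1
      linarith
    · simp only [if_neg h, sub_zero]
      exact mul_nonneg (le_of_lt hN1') (hw0 c hc)
  · rw [hw']
    simp only [← Finset.mul_sum]
    rw [Finset.sum_sub_distrib, ← Finset.mul_sum, hw1, mul_one,
      Finset.sum_ite_eq' s b (fun _ => (1:ℝ)), if_pos hb]
    field_simp; ring
  · have hsum1 : ∑ c ∈ s, w' c = 1 := by
      rw [hw']
      simp only [← Finset.mul_sum]
      rw [Finset.sum_sub_distrib, ← Finset.mul_sum, hw1, mul_one,
        Finset.sum_ite_eq' s b (fun _ => (1:ℝ)), if_pos hb]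
      field_simp; ring
    rw [Finset.centerMass_eq_of_sum_1 _ _ hsum1]
    have hwy' : ∑ c ∈ s, w c • c = y := by
      rw [← Finset.centerMass_eq_of_sum_1 _ _ hw1]
      exact hwy
    have step : ∀ c ∈ s, w' c • (id c : Fin n → ℝ) =
        (N:ℝ)⁻¹ • ((((N:ℝ)+1) * w c) • c) - (if c = b then (N:ℝ)⁻¹ • c else 0) := by
      intro c hc
      rw [hw']
      simp only [id_eq, mul_sub, sub_smul, mul_smul]
      by_cases h : c = b <;> simp [h]
    rw [Finset.sum_congr rfl step, Finset.sum_sub_distrib,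
      Finset.sum_ite_eq' s b (fun c => (N:ℝ)⁻¹ • c), if_pos hb, ← Finset.smul_sum]
    have : ∑ c ∈ s, (((N:ℝ)+1) * w c) • c = latticeEmb n x := by
      simp only [mul_smul, ← Finset.smul_sum, hwy', hy]
      rw [smul_inv_smul₀ (ne_of_gt hN1')]
    rw [this, latticeEmb_sub, hab, smul_sub]

lemma finite_smul_hull (n : ℕ) (A : Finset (Fin n → ℤ)) (r : ℝ) :
    {k : Fin n → ℤ | latticeEmb n k ∈ r • convexHull ℝ (latticeEmb n '' ↑A)}.Finite := by
  have hcomp : IsCompact (r • convexHull ℝ (latticeEmb n '' ↑A)) := by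
    have h1 : IsCompact (convexHull ℝ (latticeEmb n '' ↑A)) :=
      (Set.toFinite _).isCompact_convexHull ℝ
    simpa [Set.image_smul] using h1.image (continuous_const_smul r)
  obtain ⟨R, hR⟩ := hcomp.isBounded.exists_norm_le
  apply Set.Finite.subset (Set.finite_Icc (fun _ => -⌈R⌉) (fun _ => ⌈R⌉))
  intro k hk
  have hnorm := hR _ hk
  constructor <;> intro i
  · have h1 : ‖latticeEmb n k i‖ ≤ R := le_trans (norm_le_pi_norm _ i) hnorm
    rw [Real.norm_eq_abs, abs_le] at h1
    have : (-(⌈R⌉:ℝ)) ≤ (k i : ℝ) := le_trans (by exact_mod_cast neg_le_neg (Int.le_ceil R)) h1.1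
    exact_mod_cast this
  · have h1 : ‖latticeEmb n k i‖ ≤ R := le_trans (norm_le_pi_norm _ i) hnorm
    rw [Real.norm_eq_abs, abs_le] at h1
    have : (k i : ℝ) ≤ (⌈R⌉:ℝ) := le_trans h1.2 (Int.le_ceil R)
    exact_mod_cast this

lemma mem_add_iff (n : ℕ) (N : ℕ) (A : Finset (Fin n → ℤ)) (hA : A.Nonempty)
    (hN : A.card ≤ N) (hN1 : 1 ≤ N) (P : Set (Fin n → ℝ))
    (hP : P = convexHull ℝ (latticeEmb n '' ↑A)) (C : Finset (Fin n → ℤ))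
    (hC : ∀ k, k ∈ C ↔ latticeEmb n k ∈ (N : ℝ) • P) (k : Fin n → ℤ) :
    k ∈ A + C ↔ latticeEmb n k ∈ ((N : ℝ) + 1) • P := by
  have hconv : Convex ℝ P := hP ▸ convex_convexHull ℝ _
  have hsplit : ((N : ℝ) + 1) • P = (1 : ℝ) • P + (N : ℝ) • P := by
    rw [add_comm ((N:ℝ)) 1]
    exact hconv.add_smul zero_le_one (by positivity)
  constructor
  · intro hk
    rw [Finset.mem_add] at hk
    obtain ⟨a, ha, c, hc, rfl⟩ := hk
    rw [hsplit, latticeEmb_add]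
    exact Set.add_mem_add
      (by rw [one_smul]; exact hP ▸ subset_convexHull ℝ _ ⟨a, ha, rfl⟩)
      ((hC c).1 hc)
  · intro hk
    obtain ⟨a, ha, hc⟩ := absorb n A hA N hN hN1 k (by rwa [hP] at hk)
    rw [Finset.mem_add]
    exact ⟨a, ha, k - a, (hC _).2 (by rwa [hP]), by ring⟩

/-- Two subspaces of matrix elements `L_A, L_B` of `(ℂ*)ⁿ` are analogous (i.e.
`L_A · L_C = L_B · L_C` for some finite nonempty `C ⊆ ℤⁿ`) if and only if the convex hulls
of `A` and `B` in `ℝⁿ` coincide. -/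
theorem laurentSubspace_analogous_iff_convexHull_eq (n : ℕ) (A B : Finset (Fin n → ℤ))
    (hA : A.Nonempty) (hB : B.Nonempty) :
    (∃ C : Finset (Fin n → ℤ), C.Nonempty ∧
        laurentSubspace n A * laurentSubspace n C = laurentSubspace n B * laurentSubspace n C) ↔
      convexHull ℝ (latticeEmb n '' ↑A) = convexHull ℝ (latticeEmb n '' ↑B) := by
  constructor
  · rintro ⟨C, hC, hmul⟩
    rw [laurent_mul, laurent_mul] at hmul
    have hsum : A + C = B + C := laurent_inj n hmul
    have hsup : ∀ f : (Fin n → ℝ) →L[ℝ] ℝ,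
        A.sup' hA (fun k => f (latticeEmb n k)) = B.sup' hB (fun k => f (latticeEmb n k)) := by
      intro f
      have h1 := sup'_add n A C hA hC f
      have h2 := sup'_add n B C hB hC f
      have h3 : (A + C).sup' (hA.add hC) (fun k => f (latticeEmb n k)) =
          (B + C).sup' (hB.add hC) (fun k => f (latticeEmb n k)) :=
        Finset.sup'_congr (hA.add hC) hsum (fun _ _ => rfl)
      rw [h1, h2] at h3
      linarith
    exact Set.Subset.antisymm
      (hull_subset_of_sup_le n A B hA hB (fun f => le_of_eq (hsup f)))
      (hull_subset_of_sup_le n B A hB hA (fun f => le_of_eq (hsup f).symm))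
  · intro h
    set N : ℕ := max (max A.card B.card) 1 with hNdef
    set P : Set (Fin n → ℝ) := convexHull ℝ (latticeEmb n '' ↑A) with hPdef
    have hfin : {k : Fin n → ℤ | latticeEmb n k ∈ (N : ℝ) • P}.Finite :=
      finite_smul_hull n A (N : ℝ)
    set C : Finset (Fin n → ℤ) := hfin.toFinset with hCdef
    have hCmem : ∀ k, k ∈ C ↔ latticeEmb n k ∈ (N : ℝ) • P := by
      intro k; rw [hCdef, Set.Finite.mem_toFinset]; rfl
    have hN1 : 1 ≤ N := le_max_right _ _
    have hNA : A.card ≤ N := le_trans (le_max_left _ _) (le_max_left _ _)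
    have hNB : B.card ≤ N := le_trans (le_max_right _ _) (le_max_left _ _)
    refine ⟨C, ?_, ?_⟩
    · obtain ⟨a, ha⟩ := hA
      refine ⟨N • a, (hCmem _).2 ?_⟩
      have : latticeEmb n (N • a) = (N : ℝ) • latticeEmb n a := by
        funext i; simp [latticeEmb]
      rw [this]
      exact Set.smul_mem_smul_set (subset_convexHull ℝ _ ⟨a, ha, rfl⟩)
    · rw [laurent_mul, laurent_mul]
      congr 1
      ext k
      rw [mem_add_iff n N A hA hNA hN1 P rfl C hCmem k,
        mem_add_iff n N B hB hNB hN1 P h C hCmem k]
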